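/- The capped l_{p,q}-norm of a matrix satisfies the triangle inequality: for all matrices A, B of the same size and p, q ≥ 1, ‖A + B‖_{cap p,q} ≤ ‖A‖_{cap p,q} + ‖B‖_{cap p,q}. -/
import Mathlib

open Finset Real

/-- min of add for nonneg reals -/
lemma min_add_min_aux {a b E : ℝ} (ha : 0 ≤ a) (hb : 0 ≤ b) (hE : 0 ≤ E) :
    min (a + b) E ≤ min a E + min b E := by
  rcases le_total a E with h | h
  · rcases le_total b E with h' | h'
    · rw [min_eq_left h, min_eq_left h']
      exact min_le_left _ _
    · rw [min_eq_right h']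
      exact (min_le_right _ _).trans (le_add_of_nonneg_left (le_min ha hE))
  · rw [min_eq_right h]
    exact (min_le_right _ _).trans (le_add_of_nonneg_right (le_min hb hE))

/-- The capped `l_{p,q}`-norm of a real `r × s` matrix with threshold `ε`. -/
noncomputable def cappedNorm {r s : ℕ} (p q ε : ℝ) (M : Matrix (Fin r) (Fin s) ℝ) : ℝ :=
  (∑ j : Fin s, min (((∑ i : Fin r, |M i j| ^ p) ^ (1 / p)) ^ q) ε) ^ (1 / q)

theorem cappedNorm_triangle {r s : ℕ} (p q ε : ℝ) (hp : 1 ≤ p) (hq : 1 ≤ q) (hε : 0 < ε)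
    (A B : Matrix (Fin r) (Fin s) ℝ) :
    cappedNorm p q ε (A + B) ≤ cappedNorm p q ε A + cappedNorm p q ε B := by
  have hq0 : (0:ℝ) < q := lt_of_lt_of_le one_pos hq
  set E : ℝ := ε ^ (1 / q) with hE
  have hE0 : 0 ≤ E := rpow_nonneg hε.le _
  have hEq : E ^ q = ε := by
    rw [hE, ← Real.rpow_mul hε.le, one_div_mul_cancel hq0.ne', Real.rpow_one]
  -- column p-norms
  set a : Fin s → ℝ := fun j => (∑ i : Fin r, |A i j| ^ p) ^ (1 / p) with ha
  set b : Fin s → ℝ := fun j => (∑ i : Fin r, |B i j| ^ p) ^ (1 / p) with hb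
  set c : Fin s → ℝ := fun j => (∑ i : Fin r, |(A + B) i j| ^ p) ^ (1 / p) with hc
  have ha0 : ∀ j, 0 ≤ a j := fun j => rpow_nonneg (Finset.sum_nonneg fun i _ => rpow_nonneg (abs_nonneg _) _) _
  have hb0 : ∀ j, 0 ≤ b j := fun j => rpow_nonneg (Finset.sum_nonneg fun i _ => rpow_nonneg (abs_nonneg _) _) _
  have hc0 : ∀ j, 0 ≤ c j := fun j => rpow_nonneg (Finset.sum_nonneg fun i _ => rpow_nonneg (abs_nonneg _) _) _
  have hcab : ∀ j, c j ≤ a j + b j := by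
    intro j
    have := Real.Lp_add_le Finset.univ (fun i => A i j) (fun i => B i j) hp
    simpa [ha, hb, hc] using this
  -- min(x^q, ε) = min(x,E)^q for 0 ≤ x
  have hmin : ∀ x : ℝ, 0 ≤ x → min (x ^ q) ε = (min x E) ^ q := by
    intro x hx
    rcases le_total x E with h | h
    · rw [min_eq_left h, min_eq_left (by rw [← hEq]; exact rpow_le_rpow hx h hq0.le)]
    · rw [min_eq_right h, min_eq_right (by rw [← hEq]; exact rpow_le_rpow hE0 h hq0.le), hEq]
  -- main chain
  unfold cappedNorm
  calc (∑ j : Fin s, min ((c j) ^ q) ε) ^ (1 / q)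
      ≤ (∑ j : Fin s, |min (a j) E + min (b j) E| ^ q) ^ (1 / q) := by
        apply rpow_le_rpow (Finset.sum_nonneg fun j _ => le_min (rpow_nonneg (hc0 j) _) hε.le)
          (Finset.sum_le_sum fun j _ => ?_) (by positivity)
        rw [hmin _ (hc0 j), abs_of_nonneg (by positivity)]
        exact rpow_le_rpow (le_min (hc0 j) hE0)
          ((min_le_min_right E (hcab j)).trans (min_add_min_aux (ha0 j) (hb0 j) hE0)) hq0.le
    _ ≤ (∑ j : Fin s, |min (a j) E| ^ q) ^ (1 / q) + (∑ j : Fin s, |min (b j) E| ^ q) ^ (1 / q) := by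
        simpa using Real.Lp_add_le Finset.univ (fun j => min (a j) E) (fun j => min (b j) E) hq
    _ = (∑ j : Fin s, min ((a j) ^ q) ε) ^ (1 / q) + (∑ j : Fin s, min ((b j) ^ q) ε) ^ (1 / q) := by
        congr 2 <;> apply Finset.sum_congr rfl <;> intro j _
        · rw [hmin _ (ha0 j), abs_of_nonneg (le_min (ha0 j) hE0)]
        · rw [hmin _ (hb0 j), abs_of_nonneg (le_min (hb0 j) hE0)]
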